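/- Let N ≥ 1 and c : {0,…,N−1} → ℂ. Define ĉ[j] = Σ_{ℓ=0}^{N−1} c[ℓ]·cos(π·ℓ·(2j+1)/(2N)) for 0 ≤ j ≤ N−1, let ω = exp(−2πi/(4N)), define x : {0,…,4N−1} → ℂ by x[0] = 2c[0], x[ℓ] = x[4N−ℓ] = c[ℓ] for 1 ≤ ℓ ≤ N−1 and x[ℓ] = 0 otherwise, and define f : {0,…,2N−1} → ℂ by f[j] = ω^j · x[(j + 3N) mod 4N]. Then the length-2N DFT f̂[j] = Σ_{ℓ=0}^{2N−1} f[ℓ]·exp(−2πi·jℓ/(2N)) satisfies, for every 0 ≤ j ≤ 2N−1: f̂[j] = 2·ω^{(2j+1)N}·ĉ[min(j, 2N−1−j)]. Consequently every entry of f is a scalar multiple of an entry of c and every entry of f̂ is a scalar multiple of an entry of ĉ, so c (resp. ĉ) is k-sparse if and only if f (resp. f̂) is 2k-sparse; this reduces the sparse Chebyshev/DCT recovery problem to the sparse DFT. -/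

import Mathlib

/-- Reduction of the sparse Chebyshev/DCT recovery problem to the sparse DFT:
the length-`2N` DFT of `f[j] = ω^j · x[(j+3N) mod 4N]` recovers the Chebyshev
transform of `c`, up to explicit scalar factors. -/
theorem stmt_16 (N : ℕ) (hN : 1 ≤ N) (c x : ℕ → ℂ)
    (hx0 : x 0 = 2 * c 0)
    (hx1 : ∀ ℓ, 1 ≤ ℓ → ℓ < N → x ℓ = c ℓ)
    (hx2 : ∀ ℓ, 1 ≤ ℓ → ℓ < N → x (4 * N - ℓ) = c ℓ)
    (hx3 : ∀ ℓ, N ≤ ℓ → ℓ ≤ 3 * N → x ℓ = 0)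
    (ω : ℂ) (hω : ω = Complex.exp (-(2 * (Real.pi : ℂ) * Complex.I) / (4 * (N : ℂ))))
    (f : ℕ → ℂ) (hf : ∀ ℓ, ℓ < 2 * N → f ℓ = ω ^ ℓ * x ((ℓ + 3 * N) % (4 * N)))
    (j : ℕ) (hj : j < 2 * N) :
    ∑ ℓ ∈ Finset.range (2 * N),
        f ℓ * Complex.exp (-(2 * (Real.pi : ℂ) * Complex.I) * ((j : ℂ) * (ℓ : ℂ)) / (2 * (N : ℂ))) =
      2 * ω ^ ((2 * j + 1) * N) * ∑ ℓ ∈ Finset.range N,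
        c ℓ * (Real.cos (Real.pi * (ℓ : ℝ) * (2 * ((min j (2 * N - 1 - j) : ℕ) : ℝ) + 1) /
          (2 * (N : ℝ))) : ℂ) := by
  have hN0 : (N : ℂ) ≠ 0 := Nat.cast_ne_zero.mpr (by omega)
  have hNr : (N : ℝ) ≠ 0 := Nat.cast_ne_zero.mpr (by omega)
  -- ω powers as exponentials
  have hpow : ∀ k : ℕ, ω ^ k =
      Complex.exp (-(Real.pi * (k : ℂ) / (2 * (N : ℂ))) * Complex.I) := by
    intro k
    rw [hω, ← Complex.exp_nat_mul]
    congr 1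
    field_simp
    ring
  -- the real cosine angle with `min j (2N-1-j)` equals the one with `j`
  have hcos : ∀ ℓ : ℕ,
      Real.cos (Real.pi * (ℓ : ℝ) * (2 * ((min j (2 * N - 1 - j) : ℕ) : ℝ) + 1) / (2 * (N : ℝ))) =
      Real.cos (Real.pi * (ℓ : ℝ) * (2 * (j : ℝ) + 1) / (2 * (N : ℝ))) := by
    intro ℓ
    rcases lt_or_ge j N with h | h
    · have hmj : min j (2 * N - 1 - j) = j := by omega
      rw [hmj]
    · have hmj : min j (2 * N - 1 - j) = 2 * N - 1 - j := by omega
      rw [hmj]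
      have h4 : (2 * (j : ℝ) + 1) = 4 * (N : ℝ) - (2 * ((2 * N - 1 - j : ℕ) : ℝ) + 1) := by
        have hnat : (2 * j + 1) + (2 * (2 * N - 1 - j) + 1) = 4 * N := by omega
        have := congrArg (Nat.cast : ℕ → ℝ) hnat
        push_cast at this
        linarith
      rw [h4]
      have harg : Real.pi * (ℓ : ℝ) * (4 * (N : ℝ) - (2 * ((2 * N - 1 - j : ℕ) : ℝ) + 1)) / (2 * (N : ℝ)) =
          (ℓ : ℝ) * (2 * Real.pi) -
            Real.pi * (ℓ : ℝ) * (2 * ((2 * N - 1 - j : ℕ) : ℝ) + 1) / (2 * (N : ℝ)) := by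
        field_simp
        ring
      have hsin : Real.sin ((ℓ : ℝ) * (2 * Real.pi)) = 0 := by
        have h2 : ((ℓ : ℝ)) * (2 * Real.pi) = ((2 * ℓ : ℕ) : ℝ) * Real.pi := by push_cast; ring
        rw [h2, Real.sin_nat_mul_pi]
      rw [harg, Real.cos_sub, Real.cos_nat_mul_two_pi, hsin]
      ring
  -- key pointwise complex identity
  have hkey : ∀ ℓ : ℕ, ℓ < N →
      2 * ω ^ ((2 * j + 1) * N) *
        (Real.cos (Real.pi * (ℓ : ℝ) * (2 * ((min j (2 * N - 1 - j) : ℕ) : ℝ) + 1) /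
          (2 * (N : ℝ))) : ℂ) =
      ω ^ ((2 * j + 1) * (N + ℓ)) + ω ^ ((2 * j + 1) * (N - ℓ)) := by
    intro ℓ hℓ
    rw [hcos ℓ, hpow, hpow, hpow]
    set A : ℂ := Real.pi * (((2 * j + 1) * N : ℕ) : ℂ) / (2 * (N : ℂ)) with hA
    set B : ℂ := ((Real.pi * (ℓ : ℝ) * (2 * (j : ℝ) + 1) / (2 * (N : ℝ)) : ℝ) : ℂ) with hB
    have h1 : (Real.pi : ℂ) * (((2 * j + 1) * (N + ℓ) : ℕ) : ℂ) / (2 * (N : ℂ)) = A + B := by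
      rw [hA, hB]
      push_cast
      field_simp
    have h2 : (Real.pi : ℂ) * (((2 * j + 1) * (N - ℓ) : ℕ) : ℂ) / (2 * (N : ℂ)) = A - B := by
      rw [hA, hB]
      push_cast [Nat.cast_sub hℓ.le]
      field_simp
    rw [h1, h2, Complex.ofReal_cos, ← hB]
    have e1 : Complex.exp (-(A + B) * Complex.I) =
        Complex.exp (-A * Complex.I) * Complex.exp (-B * Complex.I) := by
      rw [← Complex.exp_add]; congr 1; ring
    have e2 : Complex.exp (-(A - B) * Complex.I) =
        Complex.exp (-A * Complex.I) * Complex.exp (B * Complex.I) := by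
      rw [← Complex.exp_add]; congr 1; ring
    rw [e1, e2]
    linear_combination Complex.exp (-A * Complex.I) * (Complex.two_cos B)
  -- rewrite each term of the LHS sum
  have hterm : ∀ ℓ ∈ Finset.range (2 * N),
      f ℓ * Complex.exp (-(2 * (Real.pi : ℂ) * Complex.I) * ((j : ℂ) * (ℓ : ℂ)) / (2 * (N : ℂ))) =
      x ((ℓ + 3 * N) % (4 * N)) * ω ^ ((2 * j + 1) * ℓ) := by
    intro ℓ hℓ
    rw [Finset.mem_range] at hℓ
    rw [hf ℓ hℓ]
    have he : Complex.exp (-(2 * (Real.pi : ℂ) * Complex.I) * ((j : ℂ) * (ℓ : ℂ)) / (2 * (N : ℂ)))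
        = ω ^ (2 * j * ℓ) := by
      rw [hpow]
      congr 1
      push_cast
      field_simp
    rw [he, show (2 * j + 1) * ℓ = ℓ + 2 * j * ℓ by ring, pow_add]
    ring
  rw [Finset.sum_congr rfl hterm]
  -- evaluate x at the shifted indices
  have hval1 : ∀ ℓ ∈ Finset.range N,
      x ((ℓ + 3 * N) % (4 * N)) * ω ^ ((2 * j + 1) * ℓ) =
      (if ℓ = 0 then 0 else c (N - ℓ) * ω ^ ((2 * j + 1) * ℓ)) := by
    intro ℓ hℓ
    rw [Finset.mem_range] at hℓ
    rcases Nat.eq_zero_or_pos ℓ with h0 | h0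
    · subst h0
      rw [if_pos rfl, Nat.mod_eq_of_lt (by omega), hx3 (0 + 3 * N) (by omega) (by omega)]
      ring
    · rw [if_neg (by omega), Nat.mod_eq_of_lt (by omega),
        show ℓ + 3 * N = 4 * N - (N - ℓ) by omega, hx2 (N - ℓ) (by omega) (by omega)]
  have hval2 : ∀ ℓ ∈ Finset.range N,
      x ((N + ℓ + 3 * N) % (4 * N)) * ω ^ ((2 * j + 1) * (N + ℓ)) =
      (if ℓ = 0 then 2 * c 0 else c ℓ) * ω ^ ((2 * j + 1) * (N + ℓ)) := by
    intro ℓ hℓ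
    rw [Finset.mem_range] at hℓ
    rcases Nat.eq_zero_or_pos ℓ with h0 | h0
    · subst h0
      rw [if_pos rfl, show N + 0 + 3 * N = 4 * N by ring, Nat.mod_self, hx0]
    · rw [if_neg (by omega), show N + ℓ + 3 * N = 4 * N + ℓ by ring, Nat.add_mod_left,
        Nat.mod_eq_of_lt (by omega), hx1 ℓ (by omega) hℓ]
  conv_lhs => rw [show 2 * N = N + N by ring, Finset.sum_range_add]
  rw [Finset.sum_congr rfl hval1, Finset.sum_congr rfl hval2]
  -- rewrite the RHS using hkey
  have hRHS : 2 * ω ^ ((2 * j + 1) * N) * ∑ ℓ ∈ Finset.range N,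
      c ℓ * (Real.cos (Real.pi * (ℓ : ℝ) * (2 * ((min j (2 * N - 1 - j) : ℕ) : ℝ) + 1) /
        (2 * (N : ℝ))) : ℂ) =
      (∑ ℓ ∈ Finset.range N, c ℓ * ω ^ ((2 * j + 1) * (N + ℓ))) +
      (∑ ℓ ∈ Finset.range N, c ℓ * ω ^ ((2 * j + 1) * (N - ℓ))) := by
    rw [Finset.mul_sum, ← Finset.sum_add_distrib]
    refine Finset.sum_congr rfl fun ℓ hℓ => ?_
    rw [Finset.mem_range] at hℓ
    have hk := hkey ℓ hℓ
    calc 2 * ω ^ ((2 * j + 1) * N) *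
          (c ℓ * (Real.cos (Real.pi * (ℓ : ℝ) * (2 * ((min j (2 * N - 1 - j) : ℕ) : ℝ) + 1) /
            (2 * (N : ℝ))) : ℂ))
        = c ℓ * (2 * ω ^ ((2 * j + 1) * N) *
          (Real.cos (Real.pi * (ℓ : ℝ) * (2 * ((min j (2 * N - 1 - j) : ℕ) : ℝ) + 1) /
            (2 * (N : ℝ))) : ℂ)) := by ring
      _ = c ℓ * (ω ^ ((2 * j + 1) * (N + ℓ)) + ω ^ ((2 * j + 1) * (N - ℓ))) := by rw [hk]
      _ = c ℓ * ω ^ ((2 * j + 1) * (N + ℓ)) + c ℓ * ω ^ ((2 * j + 1) * (N - ℓ)) := by ring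
  rw [hRHS]
  -- split the second-half sum
  have hsplit : ∀ ℓ ∈ Finset.range N,
      (if ℓ = 0 then 2 * c 0 else c ℓ) * ω ^ ((2 * j + 1) * (N + ℓ)) =
      c ℓ * ω ^ ((2 * j + 1) * (N + ℓ)) +
        (if ℓ = 0 then c 0 * ω ^ ((2 * j + 1) * N) else 0) := by
    intro ℓ _
    rcases Nat.eq_zero_or_pos ℓ with h0 | h0
    · subst h0; simp; ring
    · rw [if_neg (by omega), if_neg (by omega)]; ring
  rw [Finset.sum_congr rfl hsplit, Finset.sum_add_distrib, Finset.sum_ite_eq' (Finset.range N) 0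
    (fun _ => c 0 * ω ^ ((2 * j + 1) * N)), if_pos (Finset.mem_range.mpr (by omega))]
  -- remaining: first-half + extra term = reflected sum
  obtain ⟨M, rfl⟩ : ∃ M, N = M + 1 := ⟨N - 1, by omega⟩
  have L1 : (∑ ℓ ∈ Finset.range (M + 1),
      (if ℓ = 0 then 0 else c (M + 1 - ℓ) * ω ^ ((2 * j + 1) * ℓ))) =
      ∑ i ∈ Finset.range M, c (M - i) * ω ^ ((2 * j + 1) * (i + 1)) := by
    rw [Finset.sum_range_succ'
      (fun ℓ => if ℓ = 0 then 0 else c (M + 1 - ℓ) * ω ^ ((2 * j + 1) * ℓ)) M]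
    rw [if_pos rfl, add_zero]
    refine Finset.sum_congr rfl fun i _ => ?_
    rw [if_neg (Nat.succ_ne_zero i), show M + 1 - (i + 1) = M - i by omega]
  have R1 : (∑ ℓ ∈ Finset.range (M + 1), c ℓ * ω ^ ((2 * j + 1) * (M + 1 - ℓ))) =
      (∑ i ∈ Finset.range M, c (M - i) * ω ^ ((2 * j + 1) * (i + 1))) +
        c 0 * ω ^ ((2 * j + 1) * (M + 1)) := by
    rw [← Finset.sum_range_reflect (fun ℓ => c ℓ * ω ^ ((2 * j + 1) * (M + 1 - ℓ))) (M + 1)]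
    rw [Finset.sum_range_succ
      (fun i => c (M + 1 - 1 - i) * ω ^ ((2 * j + 1) * (M + 1 - (M + 1 - 1 - i)))) M]
    congr 1
    · refine Finset.sum_congr rfl fun i hi => ?_
      rw [Finset.mem_range] at hi
      rw [show M + 1 - 1 - i = M - i by omega, show M + 1 - (M - i) = i + 1 by omega]
    · rw [show M + 1 - 1 - M = 0 by omega, show M + 1 - 0 = M + 1 by omega]
  rw [L1, R1]
  ring
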